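/- The scalar continuous-time LQR cost never satisfies a global Polyak–Łojasiewicz inequality: there is no μ > 0 such that (deriv J(k))² ≥ μ (J(k) − J(k*)) for all k > a. -/

import Mathlib

set_option maxHeartbeats 1000000 in
/-- The scalar continuous-time LQR cost never satisfies a global Polyak–Łojasiewicz
inequality on the stabilizing set `k > a`. -/
theorem scalar_LQR_no_global_PLI
    (a q r : ℝ) (hq : 0 < q) (hr : 0 < r)
    (J : ℝ → ℝ) (hJ : ∀ k : ℝ, J k = (r * k ^ 2 + q) / (2 * (k - a)))
    (kstar : ℝ) (hkstar : kstar = a + Real.sqrt (a ^ 2 + q / r)) :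
    ¬ ∃ μ : ℝ, 0 < μ ∧
      ∀ k : ℝ, a < k → (deriv J k) ^ 2 ≥ μ * (J k - J kstar) := by
  rintro ⟨μ, hμ, hPL⟩
  set C := J kstar with hC
  set D : ℝ := 2 * (2 * r + q) with hD
  set k : ℝ := max (2 * |a| + 1) (max (a + 1) ((4 / r) * (D ^ 2 / μ + |C|) + 1)) with hk
  have hk1 : 2 * |a| + 1 ≤ k := le_max_left _ _
  have hk2 : a + 1 ≤ k := le_trans (le_max_left _ _) (le_max_right _ _)
  have hk3 : (4 / r) * (D ^ 2 / μ + |C|) + 1 ≤ k :=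
    le_trans (le_max_right _ _) (le_max_right _ _)
  have hak : a < k := by linarith
  have hkpos : (1 : ℝ) ≤ k := by
    have := abs_nonneg a; linarith
  have hka : k / 2 ≤ k - a := by
    have : a ≤ |a| := le_abs_self a
    linarith
  have hka2 : k - a ≤ 2 * k := by
    have : -a ≤ |a| := neg_le_abs a
    linarith
  have hkapos : 0 < k - a := by linarith
  clear_value k C D
  clear hk hC
  -- derivative of J at k
  have hJfun : J = fun x => (r * x ^ 2 + q) / (2 * (x - a)) := funext hJ
  have hne : 2 * (k - a) ≠ 0 := by positivity
  have h1 : HasDerivAt (fun x : ℝ => r * x ^ 2 + q) (2 * r * k) k := by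
    have := ((hasDerivAt_pow 2 k).const_mul r).add_const q
    simpa [mul_comm, mul_assoc, mul_left_comm] using this
  have h2 : HasDerivAt (fun x : ℝ => 2 * (x - a)) 2 k := by
    simpa using ((hasDerivAt_id k).sub_const a).const_mul 2
  have hder : HasDerivAt J ((2 * r * k * (2 * (k - a)) - (r * k ^ 2 + q) * 2) / (2 * (k - a)) ^ 2) k := by
    rw [hJfun]; exact h1.div h2 hne
  have hderivJ : deriv J k = (r * k ^ 2 - 2 * a * r * k - q) / (2 * (k - a) ^ 2) := by
    rw [hder.deriv]
    field_simp
    ring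
  -- bound on the derivative
  have hNabs : |r * k ^ 2 - 2 * a * r * k - q| ≤ (2 * r + q) * k ^ 2 := by
    rw [abs_le]
    constructor
    · have h2a : 2 * |a| ≤ k - 1 := by linarith
      have : |2 * a * r * k| ≤ (k - 1) * r * k := by
        have he : |2 * a * r * k| = 2 * |a| * r * k := by
          rw [abs_mul, abs_mul, abs_mul, abs_of_pos hr,
            abs_of_pos (by linarith : (0:ℝ) < k)]
          norm_num
        rw [he]
        nlinarith [mul_le_mul_of_nonneg_right h2a (by positivity : (0:ℝ) ≤ r * k)]
      have habs := abs_le.mp this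
      nlinarith [sq_nonneg k, sq_nonneg (k - 1)]
    · have h2a : 2 * |a| ≤ k - 1 := by linarith
      have : |2 * a * r * k| ≤ (k - 1) * r * k := by
        have he : |2 * a * r * k| = 2 * |a| * r * k := by
          rw [abs_mul, abs_mul, abs_mul, abs_of_pos hr,
            abs_of_pos (by linarith : (0:ℝ) < k)]
          norm_num
        rw [he]
        nlinarith [mul_le_mul_of_nonneg_right h2a (by positivity : (0:ℝ) ≤ r * k)]
      have habs := abs_le.mp this
      nlinarith [sq_nonneg k, sq_nonneg (k - 1)]
  have hdenlb : k ^ 2 / 2 ≤ 2 * (k - a) ^ 2 := by nlinarith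
  have hderabs : |deriv J k| ≤ D := by
    rw [hderivJ, abs_div]
    have hdenpos : 0 < 2 * (k - a) ^ 2 := by positivity
    rw [abs_of_pos hdenpos]
    have h1 : |r * k ^ 2 - 2 * a * r * k - q| / (2 * (k - a) ^ 2)
        ≤ ((2 * r + q) * k ^ 2) / (k ^ 2 / 2) := by
      apply div_le_div₀ (by positivity) hNabs (by positivity) hdenlb
    calc _ ≤ ((2 * r + q) * k ^ 2) / (k ^ 2 / 2) := h1
      _ = D := by rw [hD]; field_simp
  have hderivsq : (deriv J k) ^ 2 ≤ D ^ 2 := by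
    have := sq_abs (deriv J k)
    nlinarith [abs_nonneg (deriv J k)]
  -- lower bound on J k
  have hJlb : r * k / 4 ≤ J k := by
    rw [hJ k]
    have h1 : r * k ^ 2 / (4 * k) ≤ (r * k ^ 2 + q) / (2 * (k - a)) := by
      apply div_le_div₀ (by positivity) (by linarith) (by positivity) (by linarith)
    calc r * k / 4 = r * k ^ 2 / (4 * k) := by
          field_simp
      _ ≤ _ := h1
  -- final contradiction
  have hk3' : D ^ 2 / μ + |C| + r / 4 ≤ r * k / 4 := by
    have h := mul_le_mul_of_nonneg_left hk3 (le_of_lt (by positivity : (0:ℝ) < r / 4))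
    have : r / 4 * ((4 / r) * (D ^ 2 / μ + |C|)) = D ^ 2 / μ + |C| := by
      field_simp
    nlinarith
  have hCle : C ≤ |C| := le_abs_self C
  have hJC : D ^ 2 / μ < J k - C := by nlinarith
  have hfin : D ^ 2 < μ * (J k - C) := by
    have := (div_lt_iff₀ hμ).mp hJC
    linarith [this]
  have := hPL k hak
  nlinarith
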